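/- Let (X,G) be a symmetric G-metric space and T: X → X an injective, orbitally continuous map such that X is T-orbitally complete and T satisfies G(Tx,Ty,Tz) < q·max{ G(x,y,z), a(x,y,z)·G(Tx,y,z)·G(x,Ty,z)·G(x,y,Tz), [G(x,y,z)·G(Tx,Ty,Tz)]^{-1}·G(x,Tx,Tx)·G(y,Ty,Ty)·G(z,Tz,Tz) } for all x,y,z ∈ X with x ≠ y, where 0 ≤ q < 1 and a: X³ → [0,∞). Then for each x ∈ X, the sequence (T^n x) G-converges to some point u_x ∈ X with T u_x = u_x. -/

import Mathlib

open Filter Topology Function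

structure GMetricSpace (X : Type*) where
  G : X → X → X → ℝ
  nonneg : ∀ x y z, 0 ≤ G x y z
  eq_zero_iff : ∀ x y z, G x y z = 0 ↔ x = y ∧ y = z
  le_of_ne : ∀ x y z, z ≠ y → G x x y ≤ G x y z
  symm_swap : ∀ x y z, G x y z = G x z y
  symm_cycle : ∀ x y z, G x y z = G y z x
  rect : ∀ x y z a, G x y z ≤ G x a a + G a y z

/-- `(x_n)` G-converges to `x`. -/
def GConv {X : Type*} (g : GMetricSpace X) (s : ℕ → X) (x : X) : Prop :=
  Tendsto (fun n => g.G x (s n) (s n)) atTop (𝓝 0)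

/-- `(x_n)` is a G-Cauchy sequence. -/
def GCauchy {X : Type*} (g : GMetricSpace X) (s : ℕ → X) : Prop :=
  ∀ ε > 0, ∃ N, ∀ m ≥ N, ∀ n ≥ N, g.G (s n) (s m) (s m) < ε

/-- `(X,G)` is a symmetric G-metric space. -/
def GSymmetric {X : Type*} (g : GMetricSpace X) : Prop :=
  ∀ x y, g.G x y y = g.G x x y

/-- `T` is orbitally continuous. -/
def OrbContinuous {X : Type*} (g : GMetricSpace X) (T : X → X) : Prop :=
  ∀ (x xs : X) (φ : ℕ → ℕ), StrictMono φ →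
    GConv g (fun i => T^[φ i] x) xs → GConv g (fun i => T (T^[φ i] x)) (T xs)

/-- `X` is `T`-orbitally complete. -/
def TOrbComplete {X : Type*} (g : GMetricSpace X) (T : X → X) : Prop :=
  ∀ (a : X) (s : ℕ → X), (∀ i, ∃ k, s i = T^[k] a) → GCauchy g s → ∃ u, GConv g s u

theorem stmt_5 {X : Type*} (g : GMetricSpace X) (hsym : GSymmetric g)
    (T : X → X) (hinj : Function.Injective T)
    (horb : OrbContinuous g T) (hcomp : TOrbComplete g T)
    (q : ℝ) (hq0 : 0 ≤ q) (hq1 : q < 1)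
    (a : X → X → X → ℝ) (ha : ∀ x y z, 0 ≤ a x y z)
    (hcontr : ∀ x y z, x ≠ y →
      g.G (T x) (T y) (T z) <
        q * max (g.G x y z)
          (max (a x y z * g.G (T x) y z * g.G x (T y) z * g.G x y (T z))
            ((g.G x y z * g.G (T x) (T y) (T z))⁻¹ *
              (g.G x (T x) (T x) * g.G y (T y) (T y) * g.G z (T z) (T z))))) :
    ∀ x : X, ∃ u : X, GConv g (fun n => T^[n] x) u ∧ T u = u := by
  -- symmetric-style lemma: G p r r = G r p p
  have gsymm2 : ∀ p r : X, g.G p r r = g.G r p p := by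
    intro p r
    rw [hsym p r, g.symm_cycle p p r, g.symm_cycle p r p]
  intro x
  by_cases hfix : ∃ N, T^[N+1] x = T^[N] x
  · obtain ⟨N, hN⟩ := hfix
    have hconst : ∀ p, T^[N + p] x = T^[N] x := by
      intro p
      induction p with
      | zero => rfl
      | succ p ih =>
        have h1 : T^[N + (p+1)] x = T (T^[N + p] x) := Function.iterate_succ_apply' T (N+p) x
        rw [h1, ih, ← Function.iterate_succ_apply' T N x]
        exact hN
    refine ⟨T^[N] x, ?_, ?_⟩
    · have hev : (fun _ : ℕ => (0:ℝ)) =ᶠ[atTop]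
          (fun n => g.G (T^[N] x) (T^[n] x) (T^[n] x)) := by
        filter_upwards [eventually_ge_atTop N] with n hn
        obtain ⟨p, rfl⟩ := Nat.exists_eq_add_of_le hn
        rw [hconst p]
        exact ((g.eq_zero_iff _ _ _).mpr ⟨rfl, rfl⟩).symm
      exact tendsto_const_nhds.congr' hev
    · rw [← Function.iterate_succ_apply' T N x]; exact hN
  · push_neg at hfix
    set d : ℕ → ℝ := fun n => g.G (T^[n] x) (T^[n+1] x) (T^[n+1] x) with hd
    have hd_pos : ∀ n, 0 < d n := by
      intro n
      rcases lt_or_eq_of_le (g.nonneg (T^[n] x) (T^[n+1] x) (T^[n+1] x)) with h | h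
      · exact h
      · exact absurd ((g.eq_zero_iff _ _ _).mp h.symm).1.symm (hfix n)
    -- contraction step
    have hstep : ∀ n, d (n+1) < q * d n := by
      intro n
      have hxy : T^[n] x ≠ T^[n+1] x := (hfix n).symm
      have h := hcontr (T^[n] x) (T^[n+1] x) (T^[n+1] x) hxy
      simp only [← Function.iterate_succ_apply' T] at h
      rw [show g.G (T^[n+1] x) (T^[n+1] x) (T^[n+1] x) = 0 from
        (g.eq_zero_iff _ _ _).mpr ⟨rfl, rfl⟩] at h
      rw [mul_zero, zero_mul, zero_mul] at h
      have h3 : (d n * d (n+1))⁻¹ * (d n * d (n+1) * d (n+1)) = d (n+1) := by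
        rw [inv_mul_eq_div]
        exact mul_div_cancel_left₀ _ (mul_ne_zero (hd_pos n).ne' (hd_pos (n+1)).ne')
      change d (n+1) < q * max (d n) (max 0
        ((d n * d (n+1))⁻¹ * (d n * d (n+1) * d (n+1)))) at h
      rw [h3, max_eq_right (hd_pos (n+1)).le] at h
      rcases le_total (d (n+1)) (d n) with hle | hle
      · rwa [max_eq_left hle] at h
      · exfalso
        rw [max_eq_right hle] at h
        nlinarith [hd_pos (n+1)]
    have hgeo : ∀ n, d n ≤ q ^ n * d 0 := by
      intro n
      induction n with
      | zero => simp
      | succ n ih =>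
        calc d (n+1) ≤ q * d n := (hstep n).le
          _ ≤ q * (q ^ n * d 0) := by
              exact mul_le_mul_of_nonneg_left ih hq0
          _ = q ^ (n+1) * d 0 := by ring
    -- chain bound
    have hchain : ∀ p n, g.G (T^[n] x) (T^[n+p] x) (T^[n+p] x) ≤
        ∑ k ∈ Finset.range p, d (n+k) := by
      intro p
      induction p with
      | zero =>
        intro n
        simp [(g.eq_zero_iff (T^[n] x) (T^[n] x) (T^[n] x)).mpr ⟨rfl, rfl⟩]
      | succ p ih =>
        intro n
        have hr := g.rect (T^[n] x) (T^[n+(p+1)] x) (T^[n+(p+1)] x) (T^[n+1] x)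
        have h2 : g.G (T^[n+1] x) (T^[n+(p+1)] x) (T^[n+(p+1)] x) ≤
            ∑ k ∈ Finset.range p, d (n+1+k) := by
          have := ih (n+1)
          rwa [show n + 1 + p = n + (p+1) from by omega] at this
        have hsum : ∑ k ∈ Finset.range (p+1), d (n+k)
            = d n + ∑ k ∈ Finset.range p, d (n+1+k) := by
          rw [Finset.sum_range_succ']
          rw [add_comm]
          congr 1
          apply Finset.sum_congr rfl
          intro k _
          congr 1
          omega
        rw [hsum]
        calc g.G (T^[n] x) (T^[n+(p+1)] x) (T^[n+(p+1)] x)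
            ≤ d n + g.G (T^[n+1] x) (T^[n+(p+1)] x) (T^[n+(p+1)] x) := hr
          _ ≤ d n + ∑ k ∈ Finset.range p, d (n+1+k) := by linarith
    set C : ℝ := d 0 / (1 - q) with hC
    have hC0 : 0 ≤ C := div_nonneg (hd_pos 0).le (by linarith)
    have hbound : ∀ n p, g.G (T^[n] x) (T^[n+p] x) (T^[n+p] x) ≤ q ^ n * C := by
      intro n p
      refine (hchain p n).trans ?_
      have h1 : ∀ k ∈ Finset.range p, d (n+k) ≤ q ^ n * d 0 * q ^ k := by
        intro k _
        calc d (n+k) ≤ q ^ (n+k) * d 0 := hgeo (n+k)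
          _ = q ^ n * d 0 * q ^ k := by rw [pow_add]; ring
      calc (∑ k ∈ Finset.range p, d (n+k)) ≤
            ∑ k ∈ Finset.range p, q ^ n * d 0 * q ^ k := Finset.sum_le_sum h1
        _ = q ^ n * d 0 * ∑ k ∈ Finset.range p, q ^ k := by
            rw [Finset.mul_sum]
        _ ≤ q ^ n * d 0 * (1 - q)⁻¹ := by
            apply mul_le_mul_of_nonneg_left _
              (mul_nonneg (pow_nonneg hq0 n) (hd_pos 0).le)
            rw [geom_sum_eq (by linarith : q ≠ 1)]
            have hq1' : (0:ℝ) < 1 - q := by linarith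
            have heq : (q ^ p - 1) / (q - 1) = (1 - q ^ p) / (1 - q) := by
              rw [div_eq_div_iff (by linarith : q - 1 ≠ 0) hq1'.ne']; ring
            rw [heq, div_le_iff₀ hq1', inv_mul_cancel₀ hq1'.ne']
            have := pow_nonneg hq0 p
            linarith
        _ = q ^ n * C := by rw [hC, div_eq_mul_inv]; ring
    -- Cauchy
    have hcauchy : GCauchy g (fun n => T^[n] x) := by
      intro ε hε
      have htend : Tendsto (fun n => q ^ n * C) atTop (𝓝 0) := by
        have := (tendsto_pow_atTop_nhds_zero_of_lt_one hq0 hq1).mul_const C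
        simpa using this
      have hev := (htend.eventually (gt_mem_nhds hε)).exists_forall_of_atTop
      obtain ⟨N, hN⟩ := hev
      refine ⟨N, fun m hm n hn => ?_⟩
      have key : ∀ i j : ℕ, N ≤ i → i ≤ j →
          g.G (T^[i] x) (T^[j] x) (T^[j] x) < ε := by
        intro i j hi hij
        obtain ⟨p, rfl⟩ := Nat.exists_eq_add_of_le hij
        calc g.G (T^[i] x) (T^[i+p] x) (T^[i+p] x) ≤ q ^ i * C := hbound i p
          _ ≤ q ^ N * C := by
              apply mul_le_mul_of_nonneg_right _ hC0
              exact pow_le_pow_of_le_one hq0 hq1.le hi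
          _ < ε := hN N le_rfl
      rcases le_total n m with h | h
      · exact key n m hn h
      · rw [gsymm2]
        exact key m n hm h
    obtain ⟨u, hu⟩ := hcomp x (fun n => T^[n] x) (fun i => ⟨i, rfl⟩) hcauchy
    refine ⟨u, hu, ?_⟩
    -- fixed point
    have h1 := horb x u id strictMono_id hu
    have h1' : Tendsto (fun i => g.G (T u) (T^[i+1] x) (T^[i+1] x)) atTop (𝓝 0) := by
      have : GConv g (fun i => T (T^[id i] x)) (T u) := h1
      unfold GConv at this
      simpa only [← Function.iterate_succ_apply' T, id] using this
    have h2 : Tendsto (fun i => g.G u (T^[i+1] x) (T^[i+1] x)) atTop (𝓝 0) := by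
      have := hu.comp (tendsto_add_atTop_nat 1)
      exact this
    have hle : ∀ i, g.G u (T u) (T u) ≤
        g.G u (T^[i+1] x) (T^[i+1] x) + g.G (T u) (T^[i+1] x) (T^[i+1] x) := by
      intro i
      have := g.rect u (T u) (T u) (T^[i+1] x)
      rwa [gsymm2 (T^[i+1] x) (T u)] at this
    have hzero : g.G u (T u) (T u) ≤ 0 := by
      have hsum : Tendsto (fun i => g.G u (T^[i+1] x) (T^[i+1] x) +
          g.G (T u) (T^[i+1] x) (T^[i+1] x)) atTop (𝓝 0) := by
        simpa using h2.add h1'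
      exact ge_of_tendsto hsum (Filter.Eventually.of_forall hle)
    have : g.G u (T u) (T u) = 0 := le_antisymm hzero (g.nonneg _ _ _)
    exact ((g.eq_zero_iff _ _ _).mp this).1.symm
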